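/- Assume the insertion scenario. Let t, u ∈ V(E) be mutually visible with respect to E. Then t and u are mutually visible with respect to E'' = E ∪ {[v, vᵢ], [v, vᵢ₊₁]} if and only if openSegment ℝ t u is disjoint from T. (This is the claim of Section 5.1 of the paper: a visibility-graph edge of the current polygonal domain survives the insertion of the vertex v if and only if it does not intersect the triangle v vᵢ vᵢ₊₁.) -/

import Mathlib

open Set

/-- Points of the plane. -/
abbrev Pt := EuclideanSpace ℝ (Fin 2)

/-- `x` is an endpoint of the (nondegenerate) closed segment `s`. -/
def IsSegEndpoint (x : Pt) (s : Set Pt) : Prop :=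
  ∃ a b : Pt, a ≠ b ∧ s = segment ℝ a b ∧ (x = a ∨ x = b)

/-- An obstacle set: a finite set of nondegenerate closed segments such that any two
distinct segments intersect at most in a point that is a common endpoint of both. -/
def IsObstacleSet (E : Set (Set Pt)) : Prop :=
  E.Finite ∧
  (∀ s ∈ E, ∃ a b : Pt, a ≠ b ∧ s = segment ℝ a b) ∧
  (∀ s ∈ E, ∀ t ∈ E, s ≠ t → ∀ x ∈ s ∩ t, IsSegEndpoint x s ∧ IsSegEndpoint x t)

/-- `V(E)`: the set of all endpoints of segments of `E`. -/
def Vset (E : Set (Set Pt)) : Set Pt := {x | ∃ s ∈ E, IsSegEndpoint x s}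

/-- Two points `p ≠ q` are mutually visible with respect to `E` if the open segment
joining them is disjoint from every segment of `E`. -/
def MutuallyVisible (E : Set (Set Pt)) (p q : Pt) : Prop :=
  p ≠ q ∧ ∀ s ∈ E, openSegment ℝ p q ∩ s = ∅

/-- The cone at `q` spanned by `a` and `b`. -/
def Cone (q a b : Pt) : Set Pt :=
  {x | ∃ s t : ℝ, 0 ≤ s ∧ 0 ≤ t ∧ x = q + s • (a - q) + t • (b - q)}

/-- The boundary of a nondegenerate triangle is contained in the union of its edges. -/
lemma tri_boundary (v vi vi1 : Pt) (hind : AffineIndependent ℝ ![v, vi, vi1])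
    {x : Pt} (hx : x ∈ convexHull ℝ ({v, vi, vi1} : Set Pt))
    (hx' : x ∉ interior (convexHull ℝ ({v, vi, vi1} : Set Pt))) :
    x ∈ segment ℝ vi vi1 ∪ segment ℝ v vi ∪ segment ℝ v vi1 := by
  have htop : affineSpan ℝ (range ![v, vi, vi1]) = ⊤ := by
    rw [hind.affineSpan_eq_top_iff_card_eq_finrank_add_one]
    simp [finrank_euclideanSpace_fin]
  set b : AffineBasis (Fin 3) ℝ Pt := ⟨![v, vi, vi1], hind, htop⟩ with hb
  have hrange : range ⇑b = ({v, vi, vi1} : Set Pt) := by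
    show range ![v, vi, vi1] = _
    ext y
    simp [Matrix.range_cons, Matrix.range_empty]
    tauto
  have hsum : ∑ i, b.coord i x • b i = x := b.linear_combination_coord_eq_self x
  have hone : ∑ i, b.coord i x = 1 := b.sum_coord_apply_eq_one x
  have hnn : ∀ i, 0 ≤ b.coord i x := by
    rw [← hrange, b.convexHull_eq_nonneg_coord] at hx; exact hx
  rw [Fin.sum_univ_three] at hsum hone
  set c0 := b.coord 0 x with hc0
  set c1 := b.coord 1 x with hc1
  set c2 := b.coord 2 x with hc2
  have hn0 : 0 ≤ c0 := hnn 0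
  have hn1 : 0 ≤ c1 := hnn 1
  have hn2 : 0 ≤ c2 := hnn 2
  have hb0 : b 0 = v := rfl
  have hb1 : b 1 = vi := rfl
  have hb2 : b 2 = vi1 := rfl
  rw [hb0, hb1, hb2] at hsum
  have hzero : c0 = 0 ∨ c1 = 0 ∨ c2 = 0 := by
    by_contra h
    push_neg at h
    apply hx'
    rw [← hrange, b.interior_convexHull]
    intro i
    fin_cases i
    · exact lt_of_le_of_ne hn0 (Ne.symm h.1)
    · exact lt_of_le_of_ne hn1 (Ne.symm h.2.1)
    · exact lt_of_le_of_ne hn2 (Ne.symm h.2.2)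
  rcases hzero with hz | hz | hz
  · exact Or.inl (Or.inl ⟨c1, c2, hn1, hn2, by linarith, by rw [← hsum, hz]; module⟩)
  · exact Or.inr ⟨c0, c2, hn0, hn2, by linarith, by rw [← hsum, hz]; module⟩
  · exact Or.inl (Or.inr ⟨c0, c1, hn0, hn1, by linarith, by rw [← hsum, hz]; module⟩)

/-- If a continuous path starts in a closed set and ends outside it, there is a point of
the path lying in the set but not in its interior. -/
lemma exit_lemma {T : Set Pt} (hcl : IsClosed T) {g : ℝ → Pt} (hg : Continuous g)
    {a b : ℝ} (hab : a ≤ b) (ha : g a ∈ T) (hb : g b ∉ T) :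
    ∃ c ∈ Ico a b, g c ∈ T ∧ g c ∉ interior T := by
  set S : Set ℝ := {θ ∈ Icc a b | g θ ∈ T} with hS
  have hScl : IsClosed S := (isClosed_Icc).inter (hcl.preimage hg)
  have hSne : S.Nonempty := ⟨a, ⟨le_refl a, hab⟩, ha⟩
  have hSbdd : BddAbove S := BddAbove.mono (fun θ hθ => hθ.1) bddAbove_Icc
  set c := sSup S with hc
  have hcS : c ∈ S := hScl.csSup_mem hSne hSbdd
  have hcb : c ≠ b := fun h => hb (h ▸ hcS.2)
  refine ⟨c, ⟨hcS.1.1, lt_of_le_of_ne hcS.1.2 hcb⟩, hcS.2, ?_⟩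
  intro hint
  obtain ⟨ε, hε, hball⟩ := Metric.isOpen_iff.mp (isOpen_interior.preimage hg) c hint
  have hclt : c < b := lt_of_le_of_ne hcS.1.2 hcb
  set c' := min (c + ε / 2) b with hc'
  have hcc' : c < c' := lt_min (by linarith) hclt
  have hc'S : c' ∈ S := by
    refine ⟨⟨le_trans hcS.1.1 hcc'.le, min_le_right _ _⟩, ?_⟩
    have : c' ∈ Metric.ball c ε := by
      rw [Metric.mem_ball, Real.dist_eq, abs_of_nonneg (by linarith)]
      have : c' ≤ c + ε / 2 := min_le_left _ _
      linarith
    exact interior_subset (hball this)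
  exact absurd (le_csSup hSbdd hc'S) (not_le.mpr hcc')

/-- An element of `Vset E` lies on some segment of `E`. -/
lemma Vset_mem_sUnion {E : Set (Set Pt)} {x : Pt} (hx : x ∈ Vset E) : x ∈ ⋃₀ E := by
  obtain ⟨s, hsE, a, b, _, hseg, hab⟩ := hx
  refine ⟨s, hsE, ?_⟩
  rcases hab with rfl | rfl
  · rw [hseg]; exact left_mem_segment ℝ _ _
  · rw [hseg]; exact right_mem_segment ℝ _ _

theorem stmt_7
    (E : Set (Set Pt)) (v vi vi1 : Pt)
    (hind : AffineIndependent ℝ ![v, vi, vi1])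
    (hE : IsObstacleSet E)
    (hbase : segment ℝ vi vi1 ∈ E)
    (hT : convexHull ℝ ({v, vi, vi1} : Set Pt) ∩ ⋃₀ E = segment ℝ vi vi1)
    (t u : Pt) (ht : t ∈ Vset E) (hu : u ∈ Vset E)
    (htu : MutuallyVisible E t u) :
    MutuallyVisible (E ∪ {segment ℝ v vi, segment ℝ v vi1}) t u ↔
      openSegment ℝ t u ∩ convexHull ℝ ({v, vi, vi1} : Set Pt) = ∅ := by
  set T := convexHull ℝ ({v, vi, vi1} : Set Pt) with hTdef
  have hvT : v ∈ T := subset_convexHull ℝ _ (by simp)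
  have hviT : vi ∈ T := subset_convexHull ℝ _ (by simp)
  have hvi1T : vi1 ∈ T := subset_convexHull ℝ _ (by simp)
  have hs1T : segment ℝ v vi ⊆ T := (convex_convexHull ℝ _).segment_subset hvT hviT
  have hs2T : segment ℝ v vi1 ⊆ T := (convex_convexHull ℝ _).segment_subset hvT hvi1T
  have hTcl : IsClosed T := by
    have : ({v, vi, vi1} : Set Pt).Finite := (Set.toFinite _)
    exact (this.isCompact_convexHull (𝕜 := ℝ)).isClosed
  constructor
  · intro h
    by_contra hne
    obtain ⟨x, hxo, hxT⟩ := nonempty_iff_ne_empty.mpr hne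
    have hdbase : openSegment ℝ t u ∩ segment ℝ vi vi1 = ∅ := htu.2 _ hbase
    have hd1 : openSegment ℝ t u ∩ segment ℝ v vi = ∅ :=
      h.2 _ (Or.inr (mem_insert _ _))
    have hd2 : openSegment ℝ t u ∩ segment ℝ v vi1 = ∅ :=
      h.2 _ (Or.inr (mem_insert_of_mem _ rfl))
    set g : ℝ → Pt := fun θ => (1 - θ) • t + θ • u with hg
    have hgcont : Continuous g := by
      apply Continuous.add
      · exact (continuous_const.sub continuous_id).smul continuous_const
      · exact continuous_id.smul continuous_const
    have hoimg : openSegment ℝ t u = g '' Ioo (0:ℝ) 1 := openSegment_eq_image ℝ t u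
    obtain ⟨lam0, hlam0, hgx⟩ := hoimg ▸ hxo
    by_cases hall : ∀ θ ∈ Icc (0:ℝ) 1, g θ ∈ T
    · have htT : t ∈ T := by
        have := hall 0 ⟨le_refl _, zero_le_one⟩
        simpa [hg] using this
      have huT : u ∈ T := by
        have := hall 1 ⟨zero_le_one, le_refl _⟩
        simpa [hg] using this
      have htb : t ∈ segment ℝ vi vi1 := by
        rw [← hT]; exact ⟨htT, Vset_mem_sUnion ht⟩
      have hub : u ∈ segment ℝ vi vi1 := by
        rw [← hT]; exact ⟨huT, Vset_mem_sUnion hu⟩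
      have hsub : openSegment ℝ t u ⊆ segment ℝ vi vi1 :=
        (openSegment_subset_segment ℝ t u).trans
          ((convex_segment vi vi1).segment_subset htb hub)
      have : x ∈ openSegment ℝ t u ∩ segment ℝ vi vi1 := ⟨hxo, hsub hxo⟩
      rw [hdbase] at this
      exact this
    · push_neg at hall
      obtain ⟨mu, hmu, hgmu⟩ := hall
      have key : ∃ θ ∈ Ioo (0:ℝ) 1, g θ ∈ T ∧ g θ ∉ interior T := by
        rcases le_or_gt lam0 mu with hle | hlt
        · obtain ⟨c, hcIco, hcT, hcint⟩ :=
            exit_lemma hTcl hgcont hle (hgx ▸ hxT) hgmu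
          exact ⟨c, ⟨lt_of_lt_of_le hlam0.1 hcIco.1, lt_of_lt_of_le hcIco.2 hmu.2⟩,
            hcT, hcint⟩
        · set g' : ℝ → Pt := fun θ => g (lam0 + mu - θ) with hg'
          have hg'cont : Continuous g' :=
            hgcont.comp ((continuous_const).sub continuous_id)
          have hga : g' mu ∈ T := by
            show g (lam0 + mu - mu) ∈ T
            rw [add_sub_cancel_right]; exact hgx ▸ hxT
          have hgb : g' lam0 ∉ T := by
            show g (lam0 + mu - lam0) ∉ T
            rw [add_sub_cancel_left]; exact hgmu
          obtain ⟨c, hcIco, hcT, hcint⟩ :=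
            exit_lemma hTcl hg'cont hlt.le hga hgb
          refine ⟨lam0 + mu - c, ⟨?_, ?_⟩, hcT, hcint⟩
          · have := hcIco.2; have := hmu.1; linarith
          · have := hcIco.1; have := hlam0.2; linarith
      obtain ⟨θ, hθ, hθT, hθint⟩ := key
      have hmem : g θ ∈ openSegment ℝ t u := hoimg ▸ ⟨θ, hθ, rfl⟩
      rcases tri_boundary v vi vi1 hind hθT hθint with (hc | hc) | hc
      · have : g θ ∈ openSegment ℝ t u ∩ segment ℝ vi vi1 := ⟨hmem, hc⟩
        rw [hdbase] at this; exact this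
      · have : g θ ∈ openSegment ℝ t u ∩ segment ℝ v vi := ⟨hmem, hc⟩
        rw [hd1] at this; exact this
      · have : g θ ∈ openSegment ℝ t u ∩ segment ℝ v vi1 := ⟨hmem, hc⟩
        rw [hd2] at this; exact this
  · intro h
    refine ⟨htu.1, ?_⟩
    intro s hs
    rcases hs with hs | hs | hs
    · exact htu.2 s hs
    · subst hs
      exact eq_empty_of_subset_empty (h ▸ inter_subset_inter_right _ hs1T)
    · rw [mem_singleton_iff] at hs
      subst hs
      exact eq_empty_of_subset_empty (h ▸ inter_subset_inter_right _ hs2T)
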